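/- arXiv:1803.08135 — 5 statements merged into one kernel-verified Lean document; each statement's English description precedes it below -/
import Mathlib

section
/- For all y ≥ 0 and a ∈ ℝ, the conjugate Young function Φ*(y) = ∫₀^y arcsinh(t) dt satisfies Φ*(a·y) ≤ max(|a|, a²) · Φ*(y). -/
open Real

lemma sinh_mul_le (b : ℝ) (hb : 1 ≤ b) {s : ℝ} (hs : 0 ≤ s) :
    b * sinh s ≤ sinh (b * s) := by
  have hmono : MonotoneOn (fun x : ℝ => sinh (b * x) - b * sinh x) (Set.Ici 0) := by
    apply monotoneOn_of_deriv_nonneg (convex_Ici 0)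
    · fun_prop
    · intro x hx
      apply DifferentiableAt.differentiableWithinAt
      fun_prop
    · intro x hx
      simp only [interior_Ici, Set.mem_Ioi] at hx
      have : deriv (fun x : ℝ => sinh (b * x) - b * sinh x) x
          = b * cosh (b * x) - b * cosh x := by
        have hin : HasDerivAt (fun y : ℝ => b * y) b x := by
          simpa using (hasDerivAt_id x).const_mul b
        have h1 : HasDerivAt (fun x : ℝ => sinh (b * x)) (cosh (b * x) * b) x :=
          (Real.hasDerivAt_sinh (b * x)).comp x hin
        have h2 : HasDerivAt (fun x : ℝ => b * sinh x) (b * cosh x) x :=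
          (Real.hasDerivAt_sinh x).const_mul b
        have := (show HasDerivAt (fun x : ℝ => sinh (b * x) - b * sinh x)
          (cosh (b * x) * b - b * cosh x) x from h1.sub h2).deriv
        rw [this]; ring
      rw [this, sub_nonneg]
      have hb0 : (0:ℝ) ≤ b := le_trans zero_le_one hb
      have : cosh x ≤ cosh (b * x) := by
        rw [Real.cosh_le_cosh, abs_of_pos hx, abs_of_nonneg (mul_nonneg hb0 hx.le)]
        nlinarith
      exact mul_le_mul_of_nonneg_left this hb0
  have h0 : (fun x : ℝ => sinh (b * x) - b * sinh x) 0 ≤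
      (fun x : ℝ => sinh (b * x) - b * sinh x) s :=
    hmono (Set.mem_Ici.mpr le_rfl) hs hs
  simp only [mul_zero, sinh_zero] at h0
  linarith

lemma arsinh_mul_le (b t : ℝ) (hb : 0 ≤ b) (ht : 0 ≤ t) :
    arsinh (b * t) ≤ max 1 b * arsinh t := by
  have ha : 0 ≤ arsinh t := Real.arsinh_nonneg_iff.mpr ht
  rcases le_total b 1 with h | h
  · rw [max_eq_left h, one_mul, ← Real.arsinh_le_arsinh]
    gcongr
    nlinarith
  · rw [max_eq_right h]
    have := sinh_mul_le b h ha
    rw [Real.sinh_arsinh] at this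
    calc arsinh (b * t) ≤ arsinh (sinh (b * arsinh t)) := by gcongr
      _ = b * arsinh t := Real.arsinh_sinh _

/-- the conjugate Young function `Φ*(y) = ∫₀^y arcsinh t dt`
satisfies `Φ*(a·y) ≤ max (|a|, a²) · Φ*(y)` for `y ≥ 0` and any real `a`. -/
theorem conjYoung_delta2 (y a : ℝ) (hy : 0 ≤ y) :
    (∫ t in (0:ℝ)..(a * y), arsinh t) ≤
      max |a| (a ^ 2) * ∫ t in (0:ℝ)..y, arsinh t := by
  set b := |a| with hbdef
  have hb0 : 0 ≤ b := abs_nonneg a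
  have heven : (∫ t in (0:ℝ)..(a * y), arsinh t) = ∫ t in (0:ℝ)..(b * y), arsinh t := by
    rcases abs_choice a with h | h
    · rw [← h]
    · have : a * y = -(b * y) := by rw [hbdef]; linear_combination y * h
      rw [this]
      have := intervalIntegral.integral_comp_neg (a := 0) (b := b * y) (fun t => arsinh t)
      simp only [neg_zero] at this
      rw [intervalIntegral.integral_symm, ← this]
      simp [Real.arsinh_neg]
  rw [heven]
  have hsq : a ^ 2 = b * b := by rw [hbdef, ← sq_abs]; ring
  have hmax : max |a| (a ^ 2) = b * max 1 b := by
    rw [hsq, mul_max_of_nonneg _ _ hb0, mul_one]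
  rw [hmax]
  have hscale : (∫ t in (0:ℝ)..(b * y), arsinh t)
      = b * ∫ t in (0:ℝ)..y, arsinh (b * t) := by
    have := intervalIntegral.smul_integral_comp_mul_left (a := 0) (b := y)
      (fun t => arsinh t) b
    simp only [mul_zero, smul_eq_mul] at this
    rw [← this]
  rw [hscale, mul_assoc]
  apply mul_le_mul_of_nonneg_left _ hb0
  calc (∫ t in (0:ℝ)..y, arsinh (b * t))
      ≤ ∫ t in (0:ℝ)..y, max 1 b * arsinh t := by
        apply intervalIntegral.integral_mono_on hy
        · exact (Real.continuous_arsinh.comp (continuous_const.mul continuous_id)).intervalIntegrable _ _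
        · exact (continuous_const.mul Real.continuous_arsinh).intervalIntegrable _ _
        · intro t ht
          exact arsinh_mul_le b t hb0 ht.1
    _ = max 1 b * ∫ t in (0:ℝ)..y, arsinh t := by
        rw [← intervalIntegral.integral_const_mul]
end

section
/- For all y ≥ 0, Ψ(y) ≤ (cosh−1)_*(y) ≤ (1/2)·Ψ(2y), where Ψ(y) = (1+y)log(1+y) − y and (cosh−1)_*(y) = ∫₀^y arcsinh(t) dt. -/
open Real

lemma integral_log_one_add (y : ℝ) (hy : 0 ≤ y) :
    (∫ t in (0:ℝ)..y, log (1 + t)) = (1 + y) * log (1 + y) - y := by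
  have h : ∀ t ∈ Set.uIcc (0:ℝ) y, HasDerivAt (fun t => (1 + t) * log (1 + t) - t)
      (log (1 + t)) t := by
    intro t ht
    rw [Set.uIcc_of_le hy] at ht
    have h1 : (0:ℝ) < 1 + t := by linarith [ht.1]
    have hd : HasDerivAt (fun t : ℝ => (1 + t) * log (1 + t) - t)
        (1 * log (1 + t) + (1 + t) * (1 / (1 + t)) - 1) t := by
      have h2 : HasDerivAt (fun t : ℝ => 1 + t) 1 t := (hasDerivAt_id t).const_add 1
      have h3 : HasDerivAt (fun t : ℝ => log (1 + t)) (1 / (1 + t)) t := by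
        exact ((Real.hasDerivAt_log h1.ne').comp t h2).congr_deriv (by ring)
      exact (h2.mul h3).sub (hasDerivAt_id t)
    convert hd using 1
    field_simp
    ring
  have hcont : IntervalIntegrable (fun t => log (1 + t)) MeasureTheory.volume 0 y := by
    apply ContinuousOn.intervalIntegrable
    intro t ht
    rw [Set.uIcc_of_le hy] at ht
    have h1 : (0:ℝ) < 1 + t := by linarith [ht.1]
    exact (Real.continuousAt_log h1.ne').comp
      ((continuous_const.add continuous_id).continuousAt) |>.continuousWithinAt
  have := intervalIntegral.integral_eq_sub_of_hasDerivAt h hcont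
  simpa using this

/-- `Ψ(y) ≤ (cosh−1)_*(y) ≤ (1/2)Ψ(2y)` for `y ≥ 0`,
where `Ψ(y) = (1+y)log(1+y) − y` and `(cosh−1)_*(y) = ∫₀^y arcsinh t dt`. -/
theorem conjYoung_compare (y : ℝ) (hy : 0 ≤ y) :
    (1 + y) * log (1 + y) - y ≤ (∫ t in (0:ℝ)..y, arsinh t) ∧
      (∫ t in (0:ℝ)..y, arsinh t) ≤
        (1 / 2) * ((1 + 2 * y) * log (1 + 2 * y) - 2 * y) := by
  have harsinh_int : IntervalIntegrable (fun t => arsinh t) MeasureTheory.volume 0 y :=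
    (Real.continuous_arsinh.continuousOn).intervalIntegrable
  have hint1 : IntervalIntegrable (fun t => log (1 + t)) MeasureTheory.volume 0 y := by
    apply ContinuousOn.intervalIntegrable
    intro t ht
    rw [Set.uIcc_of_le hy] at ht
    have h1 : (0:ℝ) < 1 + t := by linarith [ht.1]
    exact (Real.continuousAt_log h1.ne').comp
      ((continuous_const.add continuous_id).continuousAt) |>.continuousWithinAt
  have hint2 : IntervalIntegrable (fun t => log (1 + 2 * t)) MeasureTheory.volume 0 y := by
    apply ContinuousOn.intervalIntegrable
    have hc2 : Continuous fun t : ℝ => 1 + 2 * t := by continuity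
    refine ContinuousOn.log hc2.continuousOn fun x hx => ?_
    rw [Set.uIcc_of_le hy] at hx
    have : (0:ℝ) < 1 + 2 * x := by linarith [hx.1]
    exact this.ne'
  have key1 : ∀ t ∈ Set.Icc (0:ℝ) y, log (1 + t) ≤ arsinh t := by
    intro t ht
    rw [Real.arsinh]
    have hs := Real.sq_sqrt (show (0:ℝ) ≤ 1 + t ^ 2 by positivity)
    have hn := Real.sqrt_nonneg (1 + t ^ 2)
    have h1 : (1:ℝ) ≤ sqrt (1 + t ^ 2) := by nlinarith [sq_nonneg t]
    apply Real.log_le_log (by linarith [ht.1])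
    linarith
  have key2 : ∀ t ∈ Set.Icc (0:ℝ) y, arsinh t ≤ log (1 + 2 * t) := by
    intro t ht
    rw [Real.arsinh]
    have hle : sqrt (1 + t ^ 2) ≤ 1 + t := by
      have h2 := Real.sqrt_le_sqrt (show 1 + t ^ 2 ≤ (1 + t) ^ 2 by nlinarith [ht.1])
      rwa [Real.sqrt_sq (by linarith [ht.1])] at h2
    have hn := Real.sqrt_nonneg (1 + t ^ 2)
    have hs := Real.sq_sqrt (show (0:ℝ) ≤ 1 + t ^ 2 by positivity)
    have h1 : (1:ℝ) ≤ sqrt (1 + t ^ 2) := by nlinarith [sq_nonneg t]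
    apply Real.log_le_log
    · linarith [ht.1]
    · linarith
  constructor
  · calc (1 + y) * log (1 + y) - y = ∫ t in (0:ℝ)..y, log (1 + t) :=
          (integral_log_one_add y hy).symm
      _ ≤ ∫ t in (0:ℝ)..y, arsinh t :=
          intervalIntegral.integral_mono_on hy hint1 harsinh_int key1
  · calc (∫ t in (0:ℝ)..y, arsinh t) ≤ ∫ t in (0:ℝ)..y, log (1 + 2 * t) :=
          intervalIntegral.integral_mono_on hy harsinh_int hint2 key2
      _ = (1 / 2) * ((1 + 2 * y) * log (1 + 2 * y) - 2 * y) := by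
          have hsub : (∫ t in (0:ℝ)..y, log (1 + 2 * t))
              = (2:ℝ)⁻¹ • ∫ u in (2*(0:ℝ))..(2*y), log (1 + u) :=
            intervalIntegral.integral_comp_mul_left (fun u => log (1 + u)) two_ne_zero
          rw [hsub]
          simp only [mul_zero]
          rw [integral_log_one_add (2*y) (by linarith), smul_eq_mul]
          ring
end

section
/- Let M be the standard Gaussian density on ℝⁿ and let f be a probability density with respect to M·dx (i.e. f ≥ 0 and ∫ f(x)M(x)dx = 1). Then ∫ f(x)·log f(x)·M(x)dx < ∞ (finite negative entropy) if and only if ∫ (cosh−1)_*(f(x))·M(x)dx < ∞. -/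
open Real MeasureTheory
open scoped ENNReal

noncomputable section

/-- The standard `n`-dimensional Gaussian density. -/
def gaussM (n : ℕ) (x : EuclideanSpace ℝ (Fin n)) : ℝ :=
  (2 * π) ^ (-(n : ℝ) / 2) * exp (-‖x‖ ^ 2 / 2)

/-- The standard Gaussian measure `M(x)dx` on `ℝⁿ`. -/
def gaussMeasure (n : ℕ) : Measure (EuclideanSpace ℝ (Fin n)) :=
  volume.withDensity fun x => ENNReal.ofReal (gaussM n x)

/-- The conjugate Young function `(cosh−1)_*`. -/
def conjY (y : ℝ) : ℝ := ∫ t in (0:ℝ)..y, arsinh t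

lemma hasDerivAt_aux (t : ℝ) :
    HasDerivAt (fun t : ℝ => t * arsinh t - Real.sqrt (1 + t ^ 2) + 1) (arsinh t) t := by
  have h1 : HasDerivAt (fun t : ℝ => t * arsinh t)
      (1 * arsinh t + t * (Real.sqrt (1 + t ^ 2))⁻¹) t :=
    (hasDerivAt_id t).mul (Real.hasDerivAt_arsinh t)
  have hpos : (0:ℝ) < 1 + t ^ 2 := by positivity
  have h2 : HasDerivAt (fun t : ℝ => Real.sqrt (1 + t ^ 2))
      ((2 * t) / (2 * Real.sqrt (1 + t ^ 2))) t := by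
    have hin : HasDerivAt (fun t : ℝ => 1 + t ^ 2) (2 * t) t := by
      simpa using (hasDerivAt_pow 2 t).const_add 1
    have := (Real.hasDerivAt_sqrt hpos.ne').comp t hin
    exact this.congr_deriv (by ring)
  have hs : Real.sqrt (1 + t ^ 2) ≠ 0 := (Real.sqrt_pos.mpr hpos).ne'
  have := ((h1.sub h2).add_const 1)
  exact this.congr_deriv (by rw [mul_div_mul_left _ _ two_ne_zero]; ring)

lemma conjY_eq (y : ℝ) : conjY y = y * arsinh y - Real.sqrt (1 + y ^ 2) + 1 := by
  have h := intervalIntegral.integral_eq_sub_of_hasDerivAt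
    (f := fun t : ℝ => t * arsinh t - Real.sqrt (1 + t ^ 2) + 1)
    (f' := fun t => arsinh t) (a := 0) (b := y)
    (fun t _ => hasDerivAt_aux t)
    (Real.continuous_arsinh.intervalIntegrable 0 y)
  simp only [conjY, h]
  simp

lemma continuous_conjY : Continuous conjY := by
  have : conjY = fun y => y * arsinh y - Real.sqrt (1 + y ^ 2) + 1 := by
    funext y; exact conjY_eq y
  rw [this]
  exact ((continuous_id.mul Real.continuous_arsinh).sub
    ((continuous_const.add (continuous_pow 2)).sqrt)).add continuous_const

lemma sqrt_two_le : Real.sqrt 2 ≤ 1.5 := by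
  rw [show (1.5:ℝ) = Real.sqrt (1.5 ^ 2) by rw [Real.sqrt_sq]; norm_num]
  apply Real.sqrt_le_sqrt; norm_num

lemma arsinh_one_le : arsinh 1 ≤ 1 := by
  rw [show arsinh 1 = Real.log (1 + Real.sqrt (1 + 1 ^ 2)) from rfl]
  norm_num
  have : (1:ℝ) + Real.sqrt 2 ≤ Real.exp 1 := by
    have := sqrt_two_le
    have := Real.exp_one_gt_d9
    linarith
  calc Real.log (1 + Real.sqrt 2) ≤ Real.log (Real.exp 1) :=
        Real.log_le_log (by positivity) this
    _ = 1 := Real.log_exp 1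

lemma abs_mul_log_le (y : ℝ) (h0 : 0 ≤ y) (h1 : y ≤ 1) : |y * Real.log y| ≤ 1 := by
  rcases eq_or_lt_of_le h0 with h | h
  · simp [← h]
  · have hlog : Real.log y ≤ 0 := Real.log_nonpos h0 h1
    have hub : y * Real.log y ≤ 0 := mul_nonpos_of_nonneg_of_nonpos h0 hlog
    have hlb : -1 ≤ y * Real.log y := by
      have hinv : Real.log y⁻¹ ≤ y⁻¹ - 1 := Real.log_le_sub_one_of_pos (by positivity)
      rw [Real.log_inv] at hinv
      have : y * (-Real.log y) ≤ y * (y⁻¹ - 1) :=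
        mul_le_mul_of_nonneg_left hinv h0
      have hy : y * (y⁻¹ - 1) = 1 - y := by field_simp
      nlinarith
    rw [abs_le]; constructor <;> linarith

lemma key_bound (y : ℝ) (hy : 0 ≤ y) : |conjY y - y * Real.log y| ≤ 2 + 2 * y := by
  have hconj := conjY_eq y
  have hpos : (0:ℝ) < 1 + y ^ 2 := by positivity
  have hsqrt_lb : (1:ℝ) ≤ Real.sqrt (1 + y ^ 2) :=
    Real.one_le_sqrt.mpr (by nlinarith)
  have hsqrt_ub : Real.sqrt (1 + y ^ 2) ≤ 1 + y := by
    rw [show (1:ℝ) + y = Real.sqrt ((1 + y) ^ 2) by rw [Real.sqrt_sq (by linarith)]]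
    exact Real.sqrt_le_sqrt (by nlinarith)
  rcases le_or_gt y 1 with h1 | h1
  · -- small y
    have harsinh_nonneg : 0 ≤ arsinh y := Real.arsinh_nonneg_iff.mpr hy
    have harsinh_le : arsinh y ≤ 1 := le_trans (Real.arsinh_le_arsinh.mpr h1) arsinh_one_le
    have hc_ub : conjY y ≤ 1 := by
      rw [hconj]
      nlinarith
    have hc_lb : 0 ≤ conjY y := by
      rw [conjY]
      apply intervalIntegral.integral_nonneg hy
      intro t ht
      exact Real.arsinh_nonneg_iff.mpr ht.1
    have := abs_mul_log_le y hy h1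
    rw [abs_le] at this ⊢
    constructor <;> [linarith [this.2]; linarith [this.1]]
  · -- y ≥ 1
    have hy0 : (0:ℝ) < y := by linarith
    have harsinh : arsinh y = Real.log (y + Real.sqrt (1 + y ^ 2)) := rfl
    have hlb : Real.log y ≤ arsinh y := by
      rw [harsinh]
      exact Real.log_le_log hy0 (by linarith [Real.sqrt_nonneg (1 + y ^ 2)])
    have hsq2 : Real.sqrt (1 + y ^ 2) ≤ y * 1.5 := by
      calc Real.sqrt (1 + y ^ 2) ≤ Real.sqrt (2 * y ^ 2) := Real.sqrt_le_sqrt (by nlinarith)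
        _ = Real.sqrt 2 * y := by
            rw [show 2 * y ^ 2 = 2 * y ^ 2 from rfl, Real.sqrt_mul (by norm_num),
              Real.sqrt_sq hy0.le]
        _ ≤ y * 1.5 := by nlinarith [sqrt_two_le, Real.sqrt_nonneg 2]
    have hub : arsinh y ≤ Real.log y + 1 := by
      rw [harsinh]
      have h3 : y + Real.sqrt (1 + y ^ 2) ≤ y * Real.exp 1 := by
        have := Real.exp_one_gt_d9
        nlinarith
      calc Real.log (y + Real.sqrt (1 + y ^ 2)) ≤ Real.log (y * Real.exp 1) :=
            Real.log_le_log (by positivity) h3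
        _ = Real.log y + 1 := by rw [Real.log_mul hy0.ne' (Real.exp_pos 1).ne', Real.log_exp]
    have hmul_lb : y * Real.log y ≤ y * arsinh y := mul_le_mul_of_nonneg_left hlb hy0.le
    have hmul_ub : y * arsinh y ≤ y * Real.log y + y := by
      have := mul_le_mul_of_nonneg_left hub hy0.le
      nlinarith
    rw [hconj, abs_le]
    constructor <;> nlinarith

lemma integrable_gaussM (n : ℕ) : Integrable (gaussM n) (volume) := by
  have hb : (0:ℝ) < (1/2 : ℂ).re := by norm_num
  have h := GaussianFourier.integrable_cexp_neg_mul_sq_norm_add (V := EuclideanSpace ℝ (Fin n))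
    (b := (1/2 : ℂ)) hb 0 0
  have h2 : Integrable (fun x : EuclideanSpace ℝ (Fin n) => Real.exp (-‖x‖ ^ 2 / 2)) volume := by
    have h3 := h.re
    refine h3.congr (Filter.Eventually.of_forall fun x => ?_)
    have : (-(1/2 : ℂ) * (‖x‖:ℂ) ^ 2 + 0 * (inner ℝ (0 : EuclideanSpace ℝ (Fin n)) x : ℝ))
        = ((-‖x‖ ^ 2 / 2 : ℝ) : ℂ) := by push_cast; ring
    simp only
    rw [this]
    exact Complex.exp_ofReal_re _
  have := h2.const_mul ((2 * π) ^ (-(n:ℝ)/2))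
  exact this.congr (Filter.Eventually.of_forall fun x => rfl)

instance gaussMeasure_finite (n : ℕ) : IsFiniteMeasure (gaussMeasure n) := by
  rw [gaussMeasure]
  refine isFiniteMeasure_withDensity ?_
  exact (integrable_gaussM n).lintegral_lt_top.ne

/-- a density `f` of the Gaussian space has finite (negative) entropy
iff `f` belongs to the mixture space `L^{(cosh−1)_*}(M)`. -/
theorem finite_entropy_iff_mixture {n : ℕ} (f : EuclideanSpace ℝ (Fin n) → ℝ)
    (hmeas : Measurable f) (hpos : ∀ x, 0 ≤ f x)
    (hdens : ∫ x, f x ∂(gaussMeasure n) = 1) :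
    Integrable (fun x => f x * log (f x)) (gaussMeasure n) ↔
      Integrable (fun x => conjY (f x)) (gaussMeasure n) := by
  have hf_int : Integrable f (gaussMeasure n) := by
    by_contra h
    rw [integral_undef h] at hdens
    norm_num at hdens
  have hbound_int : Integrable (fun x => 2 + 2 * f x) (gaussMeasure n) :=
    (integrable_const (2:ℝ)).add (hf_int.const_mul 2)
  have hm1 : AEStronglyMeasurable (fun x => f x * log (f x)) (gaussMeasure n) :=
    (hmeas.mul (Real.measurable_log.comp hmeas)).aestronglyMeasurable
  have hm2 : AEStronglyMeasurable (fun x => conjY (f x)) (gaussMeasure n) :=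
    (continuous_conjY.measurable.comp hmeas).aestronglyMeasurable
  have hd_int : Integrable (fun x => conjY (f x) - f x * log (f x)) (gaussMeasure n) := by
    refine Integrable.mono' hbound_int (hm2.sub hm1)
      (Filter.Eventually.of_forall fun x => ?_)
    rw [Real.norm_eq_abs]
    exact key_bound (f x) (hpos x)
  constructor
  · intro h
    have := h.add hd_int
    refine this.congr (Filter.Eventually.of_forall fun x => ?_)
    simp only [Pi.add_apply]; ring
  · intro h
    have := h.sub hd_int
    refine this.congr (Filter.Eventually.of_forall fun x => ?_)
    simp only [Pi.sub_apply]; ring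
end
end

section
/- Let f : ℝⁿ → ℝ be C² with Hessian uniformly dominated: x*·Hess f(y)·x ≤ λ|x|² for all x, y ∈ ℝⁿ with λ ≥ 0. Then for every α with 0 < α < 1/λ (any α > 0 if λ = 0), ∫ exp(α f(x)) M(x) dx < ∞. In particular every polynomial of degree ≤ 2 belongs to the exponential Orlicz space L^{cosh−1}(M). -/
open Real MeasureTheory
open scoped ENNReal

noncomputable section

lemma gaussM_cont (n : ℕ) : Continuous (gaussM n) := by
  unfold gaussM
  fun_prop

lemma integrable_rexp_neg_sq (n : ℕ) {b : ℝ} (hb : 0 < b) :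
    Integrable (fun x : EuclideanSpace ℝ (Fin n) => exp (-b * ‖x‖ ^ 2)) volume := by
  have h := (GaussianFourier.integrable_cexp_neg_mul_sq_norm_add
      (b := (b : ℂ)) (by simpa using hb) 0 (0 : EuclideanSpace ℝ (Fin n))).norm
  convert h using 2 with x
  simp [Complex.norm_exp]
  left
  norm_cast

lemma integrable_exp_mul_sq_gauss (n : ℕ) {a : ℝ} (ha : a < 1/2) :
    Integrable (fun x : EuclideanSpace ℝ (Fin n) => exp (a * ‖x‖ ^ 2)) (gaussMeasure n) := by
  rw [gaussMeasure, integrable_withDensity_iff]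
  · have : (fun x : EuclideanSpace ℝ (Fin n) =>
        exp (a * ‖x‖ ^ 2) * (ENNReal.ofReal (gaussM n x)).toReal)
        = fun x => (2 * π) ^ (-(n : ℝ) / 2) * exp (-(1/2 - a) * ‖x‖ ^ 2) := by
      funext x
      rw [ENNReal.toReal_ofReal (by unfold gaussM; positivity)]
      unfold gaussM
      rw [show rexp (a * ‖x‖ ^ 2) * ((2 * π) ^ (-(n:ℝ) / 2) * rexp (-‖x‖ ^ 2 / 2))
          = (2 * π) ^ (-(n:ℝ) / 2) * (rexp (a * ‖x‖ ^ 2) * rexp (-‖x‖ ^ 2 / 2)) from by ring,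
        ← exp_add]
      ring_nf
    rw [this]
    exact (integrable_rexp_neg_sq n (by linarith)).const_mul _
  · exact (ENNReal.measurable_ofReal.comp (gaussM_cont n).measurable)
  · exact Filter.Eventually.of_forall fun x => ENNReal.ofReal_lt_top

lemma taylor_le {n : ℕ} {f : EuclideanSpace ℝ (Fin n) → ℝ} {lam : ℝ}
    (hf : ContDiff ℝ 2 f)
    (hH : ∀ y x : EuclideanSpace ℝ (Fin n),
        iteratedFDeriv ℝ 2 f y ![x, x] ≤ lam * ‖x‖ ^ 2)
    (x : EuclideanSpace ℝ (Fin n)) :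
    f x ≤ f 0 + fderiv ℝ f 0 x + lam * ‖x‖ ^ 2 / 2 := by
  set c2 : ℝ := lam * ‖x‖ ^ 2 with hc2
  have hline : ∀ t : ℝ, HasDerivAt (fun t : ℝ => t • x) x t := by
    intro t
    simpa using (hasDerivAt_id t).smul_const x
  set g1 : ℝ → ℝ := fun t => fderiv ℝ f (t • x) x with hg1def
  have hfd : Differentiable ℝ f := hf.differentiable (by norm_num)
  have hfd2 : Differentiable ℝ (fderiv ℝ f) :=
    (hf.fderiv_right (m := 1) (by norm_num)).differentiable (by norm_num)
  have hg : ∀ t : ℝ, HasDerivAt (fun t : ℝ => f (t • x)) (g1 t) t := by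
    intro t
    exact (hfd (t • x)).hasFDerivAt.comp_hasDerivAt t (hline t)
  have hg1 : ∀ t : ℝ, HasDerivAt g1 (iteratedFDeriv ℝ 2 f (t • x) ![x, x]) t := by
    intro t
    have h1 : HasDerivAt (fun t : ℝ => fderiv ℝ f (t • x))
        (fderiv ℝ (fderiv ℝ f) (t • x) x) t :=
      (hfd2 (t • x)).hasFDerivAt.comp_hasDerivAt t (hline t)
    have h2 := h1.clm_apply (hasDerivAt_const t x)
    simp only [map_zero, add_zero] at h2
    have : iteratedFDeriv ℝ 2 f (t • x) ![x, x]
        = fderiv ℝ (fderiv ℝ f) (t • x) x x := by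
      rw [iteratedFDeriv_two_apply]
      simp
    rw [this]
    exact h2
  have step1 : ∀ t : ℝ, 0 ≤ t → g1 t ≤ g1 0 + c2 * t := by
    intro t ht
    have hφ : ∀ s : ℝ, HasDerivAt (fun s => g1 0 + c2 * s - g1 s)
        (c2 - iteratedFDeriv ℝ 2 f (s • x) ![x, x]) s := by
      intro s
      have h := (((hasDerivAt_id s).const_mul c2).const_add (g1 0)).sub (hg1 s)
      simp only [mul_one] at h
      exact h
    have hmono : Monotone (fun s => g1 0 + c2 * s - g1 s) := by
      apply monotone_of_deriv_nonneg
      · exact fun s => ((hφ s).differentiableAt)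
      · intro s
        rw [(hφ s).deriv]
        have := hH (s • x) x
        linarith
    have := hmono ht
    simp only [mul_zero, add_zero, sub_self] at this
    linarith [this]
  have hψ : ∀ s : ℝ, HasDerivAt
      (fun s : ℝ => f 0 + g1 0 * s + c2 * s ^ 2 / 2 - f (s • x))
      (g1 0 + c2 * s - g1 s) s := by
    intro s
    have h1 : HasDerivAt (fun s : ℝ => f 0 + g1 0 * s + c2 * s ^ 2 / 2)
        (g1 0 + c2 * s) s := by
      have h2 := (((hasDerivAt_id s).const_mul (g1 0)).const_add (f 0)).add
          (((hasDerivAt_pow 2 s).const_mul c2).div_const 2)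
      exact h2.congr_deriv (by norm_num; ring)
    exact h1.sub (hg s)
  have hmono2 : MonotoneOn (fun s : ℝ => f 0 + g1 0 * s + c2 * s ^ 2 / 2 - f (s • x))
      (Set.Ici (0 : ℝ)) := by
    apply monotoneOn_of_deriv_nonneg (convex_Ici 0)
    · exact Continuous.continuousOn (by
        have : Differentiable ℝ (fun s : ℝ => f 0 + g1 0 * s + c2 * s ^ 2 / 2 - f (s • x)) :=
          fun s => (hψ s).differentiableAt
        exact this.continuous)
    · exact fun s _ => (hψ s).differentiableAt.differentiableWithinAt
    · intro s hs
      rw [(hψ s).deriv]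
      have hs' : 0 ≤ s := le_of_lt (by simpa using hs)
      have := step1 s hs'
      linarith
  have h01 := hmono2 (Set.mem_Ici.mpr le_rfl) (by norm_num : (1:ℝ) ∈ Set.Ici (0:ℝ)) zero_le_one
  simp only [mul_zero, add_zero, zero_smul, zero_pow, sub_self, mul_one, one_pow, one_smul,
    mul_zero] at h01
  have hg10 : g1 0 = fderiv ℝ f 0 x := by rw [hg1def]; simp
  rw [hg10] at h01
  norm_num at h01
  linarith

lemma coord_le_norm {n : ℕ} (x : EuclideanSpace ℝ (Fin n)) (i : Fin n) :
    |x i| ≤ ‖x‖ := by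
  rw [EuclideanSpace.norm_eq]
  have h : |x i| = Real.sqrt (‖x i‖ ^ 2) := by
    rw [Real.sqrt_sq_eq_abs]; simp
  rw [h]
  apply Real.sqrt_le_sqrt
  exact Finset.single_le_sum (f := fun j => ‖x j‖ ^ 2) (fun j _ => by positivity)
    (Finset.mem_univ i)

lemma poly_bound {n : ℕ} (p : MvPolynomial (Fin n) ℝ) (hp : p.totalDegree ≤ 2)
    (x : EuclideanSpace ℝ (Fin n)) :
    |MvPolynomial.eval (fun i => x i) p|
      ≤ (∑ d ∈ p.support, |MvPolynomial.coeff d p|) * (1 + ‖x‖ ^ 2) := by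
  rw [MvPolynomial.eval_eq']
  refine (Finset.abs_sum_le_sum_abs _ _).trans ?_
  rw [Finset.sum_mul]
  apply Finset.sum_le_sum
  intro d hd
  rw [abs_mul]
  apply mul_le_mul_of_nonneg_left _ (abs_nonneg _)
  have h1 : |∏ i, x i ^ d i| ≤ ‖x‖ ^ (∑ i, d i) := by
    rw [Finset.abs_prod, ← Finset.prod_pow_eq_pow_sum]
    apply Finset.prod_le_prod (fun i _ => abs_nonneg _)
    intro i _
    rw [abs_pow]
    exact pow_le_pow_left₀ (abs_nonneg _) (coord_le_norm x i) _
  refine h1.trans ?_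
  have hdeg : (∑ i, d i) ≤ 2 := by
    have h2 := MvPolynomial.le_totalDegree hd
    have h3 : (d.sum fun _ e => e) = ∑ i, d i := by
      rw [Finsupp.sum_fintype]
      intro i; rfl
    omega
  interval_cases h : (∑ i, d i)
  · simp
  · have := norm_nonneg x
    nlinarith [sq_nonneg (‖x‖ - 1)]
  · simp

lemma cosh_le_exp_abs (t : ℝ) : cosh t ≤ exp |t| := by
  rw [Real.cosh_eq]
  have h1 := exp_le_exp.mpr (le_abs_self t)
  have h2 := exp_le_exp.mpr (neg_le_abs t)
  linarith

/-- if `f` is `C²` with Hessian uniformly dominated by `λ|x|²`, then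
`∫ exp(α f) dM < ∞` for `0 < α` with `αλ < 1`; in particular every polynomial of
degree at most 2 belongs to the exponential Orlicz space `L^{cosh−1}(M)`. -/
theorem exp_integrable_of_hessian_dominated {n : ℕ} :
    (∀ (f : EuclideanSpace ℝ (Fin n) → ℝ) (lam : ℝ), 0 ≤ lam → ContDiff ℝ 2 f →
      (∀ y x : EuclideanSpace ℝ (Fin n),
          iteratedFDeriv ℝ 2 f y ![x, x] ≤ lam * ‖x‖ ^ 2) →
      ∀ α : ℝ, 0 < α → α * lam < 1 →
        Integrable (fun x => exp (α * f x)) (gaussMeasure n)) ∧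
    (∀ p : MvPolynomial (Fin n) ℝ, p.totalDegree ≤ 2 →
      ∃ β : ℝ, 0 < β ∧
        Integrable
          (fun x : EuclideanSpace ℝ (Fin n) =>
            cosh (β * MvPolynomial.eval (fun i => x i) p) - 1) (gaussMeasure n)) := by
  constructor
  · intro f lam hlam hf hH α hα hαlam
    have hc0 : (0:ℝ) ≤ ‖fderiv ℝ f 0‖ := norm_nonneg _
    have hεpos : 0 < (1 - α * lam) / 2 := by linarith
    have ha2 : α * lam / 2 + ((1 - α * lam) / 2) / 2 < 1/2 := by linarith
    refine Integrable.mono'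
      ((integrable_exp_mul_sq_gauss n ha2).const_mul
        (exp (α * f 0 + (α * ‖fderiv ℝ f 0‖) ^ 2 / (2 * ((1 - α * lam) / 2)))))
      ((Real.continuous_exp.comp (continuous_const.mul hf.continuous)).aestronglyMeasurable)
      (Filter.Eventually.of_forall fun x => ?_)
    rw [Real.norm_eq_abs, abs_exp, ← exp_add]
    apply exp_le_exp.mpr
    have h1 := taylor_le hf hH x
    have h2 : fderiv ℝ f 0 x ≤ ‖fderiv ℝ f 0‖ * ‖x‖ :=
      (le_abs_self _).trans ((fderiv ℝ f 0).le_opNorm x)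
    have h3 : α * ‖fderiv ℝ f 0‖ * ‖x‖
        ≤ (α * ‖fderiv ℝ f 0‖) ^ 2 / (2 * ((1 - α * lam) / 2))
          + ((1 - α * lam) / 2) / 2 * ‖x‖ ^ 2 := by
      rw [← sub_nonneg]
      have key : (α * ‖fderiv ℝ f 0‖) ^ 2 / (2 * ((1 - α * lam) / 2))
          + ((1 - α * lam) / 2) / 2 * ‖x‖ ^ 2 - α * ‖fderiv ℝ f 0‖ * ‖x‖
          = (((1 - α * lam) / 2) * ‖x‖ - α * ‖fderiv ℝ f 0‖) ^ 2
            / (2 * ((1 - α * lam) / 2)) := by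
        have hne : (0:ℝ) < 1 - α * lam := by linarith
        field_simp
        ring
      rw [key]
      positivity
    have h4 := mul_le_mul_of_nonneg_left h1 hα.le
    have h5 := mul_le_mul_of_nonneg_left h2 hα.le
    nlinarith [h4, h5, h3]
  · intro p hp
    set C : ℝ := (∑ d ∈ p.support, |MvPolynomial.coeff d p|) + 1 with hC
    have hCpos : 0 < C := by
      rw [hC]
      have : (0:ℝ) ≤ ∑ d ∈ p.support, |MvPolynomial.coeff d p| :=
        Finset.sum_nonneg fun d _ => abs_nonneg _
      linarith
    refine ⟨1 / (4 * C), by positivity, ?_⟩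
    have hpcont : Continuous fun x : EuclideanSpace ℝ (Fin n) =>
        MvPolynomial.eval (fun i => x i) p := by
      exact (MvPolynomial.continuous_eval (p := p)).comp
        (continuous_pi fun i => (EuclideanSpace.proj i).continuous)
    refine Integrable.mono'
      ((integrable_exp_mul_sq_gauss n (by norm_num : (1:ℝ)/4 < 1/2)).const_mul (exp (1/4)))
      (((Real.continuous_cosh.comp (continuous_const.mul hpcont)).sub
        continuous_const).aestronglyMeasurable)
      (Filter.Eventually.of_forall fun x => ?_)
    have hb := poly_bound p hp x
    have hb2 : |MvPolynomial.eval (fun i => x i) p| ≤ C * (1 + ‖x‖ ^ 2) := by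
      apply hb.trans
      apply mul_le_mul_of_nonneg_right _ (by positivity)
      rw [hC]; linarith
    have habs : |1 / (4 * C) * MvPolynomial.eval (fun i => x i) p|
        ≤ 1/4 + 1/4 * ‖x‖ ^ 2 := by
      rw [abs_mul, abs_of_pos (by positivity : (0:ℝ) < 1 / (4 * C))]
      calc 1 / (4 * C) * |MvPolynomial.eval (fun i => x i) p|
          ≤ 1 / (4 * C) * (C * (1 + ‖x‖ ^ 2)) := by
            apply mul_le_mul_of_nonneg_left hb2 (by positivity)
        _ = 1/4 + 1/4 * ‖x‖ ^ 2 := by field_simp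
    have hnonneg : 0 ≤ cosh (1 / (4 * C) * MvPolynomial.eval (fun i => x i) p) - 1 := by
      linarith [Real.one_le_cosh (1 / (4 * C) * MvPolynomial.eval (fun i => x i) p)]
    rw [Real.norm_eq_abs, abs_of_nonneg hnonneg, ← exp_add]
    have h1 := cosh_le_exp_abs (1 / (4 * C) * MvPolynomial.eval (fun i => x i) p)
    have h2 := exp_le_exp.mpr habs
    calc cosh (1 / (4 * C) * MvPolynomial.eval (fun i => x i) p) - 1
        ≤ exp |1 / (4 * C) * MvPolynomial.eval (fun i => x i) p| := by linarith
      _ ≤ exp (1/4 + 1/4 * ‖x‖ ^ 2) := h2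
end
end

section
/- Translation boundedness in the exponential space: for f ∈ L^{cosh−1}(M) and h ∈ ℝⁿ, the translate τ_h f(x) = f(x−h) belongs to L^{cosh−1}(M), and moreover ∫(cosh−1)(ρ τ_h f) M dx ≤ 2^{−1/2} e^{|h|²/2} (∫(cosh−1)(2ρ f) M dx)^{1/2}; in particular if |h| ≤ √(log 2) then ‖τ_h f‖_{cosh−1,M} ≤ 2‖f‖_{cosh−1,M}. -/
open Real MeasureTheory
open scoped ENNReal RealInnerProductSpace

noncomputable section

/-- Luxemburg norm for the Young function `Φ` with respect to a measure `μ`. -/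
def luxNorm {E : Type*} [MeasurableSpace E] (Φ : ℝ → ℝ) (μ : Measure E)
    (g : E → ℝ) : ℝ :=
  sInf {ρ : ℝ | 0 < ρ ∧ ∫ x, Φ (g x / ρ) ∂μ ≤ 1 ∧
    Integrable (fun x => Φ (g x / ρ)) μ}

/-- The Orlicz (dual) norm on the mixture space, dual to the Luxemburg
norm of the exponential space `L^{cosh−1}(μ)`. -/
def mixtureDualNorm {E : Type*} [MeasurableSpace E] (μ : Measure E)
    (g : E → ℝ) : ℝ :=
  sSup {r : ℝ | ∃ φ : E → ℝ,
    luxNorm (fun u => Real.cosh u - 1) μ φ ≤ 1 ∧ r = ∫ x, φ x * g x ∂μ}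

variable {n : ℕ}

lemma gaussM_pos (x : EuclideanSpace ℝ (Fin n)) : 0 < gaussM n x := by
  unfold gaussM; positivity

lemma gaussM_meas : Measurable (gaussM n) := by
  unfold gaussM; fun_prop

lemma gaussM_add (z h : EuclideanSpace ℝ (Fin n)) :
    gaussM n (z + h) = exp (-‖h‖^2/2) * exp (-⟪h, z⟫) * gaussM n z := by
  have hn : ‖z + h‖^2 = ‖z‖^2 + 2*⟪h,z⟫ + ‖h‖^2 := by
    rw [norm_add_sq_real, real_inner_comm]
  unfold gaussM
  rw [hn, show -(‖z‖^2 + 2*⟪h,z⟫ + ‖h‖^2)/2 = (-‖h‖^2/2) + (-⟪h,z⟫) + (-‖z‖^2/2) by ring,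
    Real.exp_add, Real.exp_add]
  ring

lemma integral_rexp_lin (t : ℝ) (h : EuclideanSpace ℝ (Fin n)) :
    ∫ v : EuclideanSpace ℝ (Fin n), exp (-(1/2) * ‖v‖^2 + t * ⟪h, v⟫)
      = (2*π)^((n:ℝ)/2) * exp (t^2 * ‖h‖^2 / 2) := by
  rw [← Complex.ofReal_inj]
  change Complex.ofRealLI _ = _
  rw [← Complex.ofRealLI.integral_comp_comm]
  simp only [show ∀ r : ℝ, Complex.ofRealLI r = (r : ℂ) from fun r => rfl]
  have := GaussianFourier.integral_cexp_neg_mul_sq_norm_add (V := EuclideanSpace ℝ (Fin n))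
      (b := (1/2 : ℂ)) (by norm_num) (t : ℂ) h
  rw [show (fun v : EuclideanSpace ℝ (Fin n) => ((exp (-(1/2) * ‖v‖^2 + t * ⟪h, v⟫) : ℝ) : ℂ))
      = fun v : EuclideanSpace ℝ (Fin n) =>
        Complex.exp (-(1/2 : ℂ) * ‖v‖^2 + (t:ℂ) * ⟪h, v⟫) by
    funext v; rw [Complex.ofReal_exp]; push_cast; ring_nf, this]
  rw [finrank_euclideanSpace_fin]
  have h2π : (0:ℝ) ≤ 2*π := by positivity
  rw [show (π / (1/2 : ℂ)) = ((2*π : ℝ) : ℂ) by push_cast; ring,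
    show ((n:ℂ)/2) = (((n:ℝ)/2 : ℝ) : ℂ) by push_cast; ring,
    ← Complex.ofReal_cpow h2π, Complex.ofReal_mul, Complex.ofReal_exp]
  congr 1
  push_cast
  ring

lemma integrable_rexp_lin (t : ℝ) (h : EuclideanSpace ℝ (Fin n)) :
    Integrable (fun v : EuclideanSpace ℝ (Fin n) => exp (-(1/2) * ‖v‖^2 + t * ⟪h, v⟫)) := by
  have hC := GaussianFourier.integrable_cexp_neg_mul_sq_norm_add
    (V := EuclideanSpace ℝ (Fin n)) (b := (1/2 : ℂ)) (by norm_num) (t : ℂ) h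
  have heq : (fun v : EuclideanSpace ℝ (Fin n) =>
      Complex.exp (-(1/2 : ℂ) * ‖v‖^2 + (t:ℂ) * ⟪h, v⟫))
      = fun v : EuclideanSpace ℝ (Fin n) =>
        ((exp (-(1/2) * ‖v‖^2 + t * ⟪h, v⟫) : ℝ) : ℂ) := by
    funext v; rw [Complex.ofReal_exp]; push_cast; ring_nf
  rw [heq] at hC
  have := hC.re
  refine this.congr (Filter.Eventually.of_forall fun v => ?_)
  simp only [RCLike.re_to_complex, Complex.ofReal_re]

lemma integrable_gauss_lin (t : ℝ) (h : EuclideanSpace ℝ (Fin n)) :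
    Integrable (fun z : EuclideanSpace ℝ (Fin n) => gaussM n z * exp (t * ⟪h, z⟫)) := by
  have := (integrable_rexp_lin (n := n) t h).const_mul ((2 * π) ^ (-(n : ℝ) / 2))
  refine this.congr (Filter.Eventually.of_forall fun z => ?_)
  show (2 * π) ^ (-(n:ℝ) / 2) * exp (-(1/2) * ‖z‖^2 + t * ⟪h, z⟫) = gaussM n z * exp (t * ⟪h, z⟫)
  unfold gaussM
  rw [mul_assoc, ← Real.exp_add]
  ring_nf

lemma integral_gauss_lin (t : ℝ) (h : EuclideanSpace ℝ (Fin n)) :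
    ∫ z : EuclideanSpace ℝ (Fin n), gaussM n z * exp (t * ⟪h, z⟫)
      = exp (t^2 * ‖h‖^2 / 2) := by
  have heq : (fun z : EuclideanSpace ℝ (Fin n) => gaussM n z * exp (t * ⟪h, z⟫))
      = fun z : EuclideanSpace ℝ (Fin n) =>
        (2 * π) ^ (-(n : ℝ) / 2) * exp (-(1/2) * ‖z‖^2 + t * ⟪h, z⟫) := by
    funext z; unfold gaussM; rw [mul_assoc, ← Real.exp_add]; ring_nf
  rw [heq, integral_const_mul, integral_rexp_lin, ← mul_assoc,
    ← Real.rpow_add (by positivity : (0:ℝ) < 2*π),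
    show -(n:ℝ)/2 + (n:ℝ)/2 = 0 by ring, Real.rpow_zero, one_mul]

lemma lintegral_gaussMeasure {F : EuclideanSpace ℝ (Fin n) → ℝ≥0∞} (hF : Measurable F) :
    ∫⁻ x, F x ∂(gaussMeasure n) = ∫⁻ x, ENNReal.ofReal (gaussM n x) * F x ∂volume := by
  rw [gaussMeasure, lintegral_withDensity_eq_lintegral_mul _
    gaussM_meas.ennreal_ofReal hF]
  rfl

lemma lintegral_translate (F : EuclideanSpace ℝ (Fin n) → ℝ≥0∞) (hF : Measurable F)
    (h : EuclideanSpace ℝ (Fin n)) :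
    ∫⁻ x, ENNReal.ofReal (gaussM n x) * F (x - h) ∂volume
      = ∫⁻ z, ENNReal.ofReal (gaussM n (z + h)) * F z ∂volume := by
  have hmp : MeasurePreserving (fun x : EuclideanSpace ℝ (Fin n) => x - h) volume volume :=
    measurePreserving_sub_right volume h
  rw [← hmp.lintegral_comp
    (f := fun z => ENNReal.ofReal (gaussM n (z + h)) * F z)
    (((gaussM_meas.comp (measurable_add_const h)).ennreal_ofReal).mul hF)]
  congr 1; funext x; rw [sub_add_cancel]

lemma lintegral_exp_lin_mu (t : ℝ) (h : EuclideanSpace ℝ (Fin n)) :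
    ∫⁻ z, ENNReal.ofReal (exp (t * ⟪h, z⟫)) ∂(gaussMeasure n)
      = ENNReal.ofReal (exp (t^2 * ‖h‖^2 / 2)) := by
  have hFmeas : Measurable fun z : EuclideanSpace ℝ (Fin n) =>
      ENNReal.ofReal (exp (t * ⟪h, z⟫)) :=
    (Real.continuous_exp.comp
      (continuous_const.mul (continuous_const.inner continuous_id))).measurable.ennreal_ofReal
  rw [lintegral_gaussMeasure hFmeas]
  have : ∀ z : EuclideanSpace ℝ (Fin n),
      ENNReal.ofReal (gaussM n z) * ENNReal.ofReal (exp (t * ⟪h, z⟫))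
        = ENNReal.ofReal (gaussM n z * exp (t * ⟪h, z⟫)) := fun z =>
    (ENNReal.ofReal_mul (gaussM_pos z).le).symm
  simp only [this]
  rw [← ofReal_integral_eq_lintegral_ofReal (integrable_gauss_lin t h)
    (Filter.Eventually.of_forall fun z =>
      mul_nonneg (gaussM_pos z).le (exp_nonneg _)), integral_gauss_lin]

lemma cosh_sub_one_nonneg (u : ℝ) : 0 ≤ cosh u - 1 := by
  have := Real.one_le_cosh u; linarith

lemma cosh_sq_bound (u : ℝ) : (cosh u - 1)^2 ≤ (cosh (2*u) - 1)/2 := by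
  have h1 := Real.one_le_cosh u
  have h2 := Real.cosh_two_mul u
  have h3 := Real.sinh_sq u
  nlinarith

lemma core_lintegral (f : EuclideanSpace ℝ (Fin n) → ℝ) (hmeas : Measurable f)
    (ρ : ℝ) (h : EuclideanSpace ℝ (Fin n)) :
    ∫⁻ x, ENNReal.ofReal (cosh (ρ * f (x - h)) - 1) ∂(gaussMeasure n) ≤
      ENNReal.ofReal (exp (‖h‖^2)) ^ (1/2 : ℝ) *
        (∫⁻ x, ENNReal.ofReal ((cosh (2 * ρ * f x) - 1)/2) ∂(gaussMeasure n)) ^ (1/2 : ℝ) := by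
  set B : EuclideanSpace ℝ (Fin n) → ℝ≥0∞ :=
    fun z => ENNReal.ofReal (cosh (ρ * f z) - 1) with hB
  have hBmeas : Measurable B :=
    ((Real.continuous_cosh.measurable.comp (hmeas.const_mul ρ)).sub
      measurable_const).ennreal_ofReal
  set A : EuclideanSpace ℝ (Fin n) → ℝ≥0∞ :=
    fun z => ENNReal.ofReal (exp (-‖h‖^2/2) * exp (-⟪h, z⟫)) with hA
  have hAmeas : Measurable A := by
    apply Measurable.ennreal_ofReal
    exact (measurable_const.mul
      (Real.continuous_exp.comp (continuous_const.inner continuous_id).neg).measurable)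
  have hτmeas : Measurable fun x : EuclideanSpace ℝ (Fin n) => B (x - h) :=
    hBmeas.comp (measurable_sub_const h)
  have step1 : ∫⁻ x, ENNReal.ofReal (cosh (ρ * f (x - h)) - 1) ∂(gaussMeasure n)
      = ∫⁻ z, A z * B z ∂(gaussMeasure n) := by
    rw [lintegral_gaussMeasure (F := fun x => B (x - h)) hτmeas,
      lintegral_translate B hBmeas h,
      lintegral_gaussMeasure (F := fun z => A z * B z) (hAmeas.mul hBmeas)]
    congr 1; funext z
    have key : ENNReal.ofReal (gaussM n (z + h)) = A z * ENNReal.ofReal (gaussM n z) := by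
      rw [gaussM_add,
        ENNReal.ofReal_mul (mul_nonneg (exp_nonneg _) (exp_nonneg _))]
    rw [key]; ring
  have holder := ENNReal.lintegral_mul_le_Lp_mul_Lq (gaussMeasure n)
    (Real.holderConjugate_iff.mpr ⟨one_lt_two, by norm_num⟩ : Real.HolderConjugate 2 2)
    hAmeas.aemeasurable hBmeas.aemeasurable
  have stepA : ∫⁻ z, A z ^ (2:ℝ) ∂(gaussMeasure n) = ENNReal.ofReal (exp (‖h‖^2)) := by
    have hpt : ∀ z, A z ^ (2:ℝ)
        = ENNReal.ofReal (exp (-‖h‖^2)) * ENNReal.ofReal (exp ((-2) * ⟪h, z⟫)) := by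
      intro z
      show ENNReal.ofReal (exp (-‖h‖^2/2) * exp (-⟪h, z⟫)) ^ (2:ℝ) = _
      rw [ENNReal.ofReal_rpow_of_pos (by positivity),
        ← ENNReal.ofReal_mul (exp_nonneg _)]
      rw [show ((2:ℝ)) = ((2:ℕ):ℝ) by norm_num, Real.rpow_natCast,
        mul_pow, ← Real.exp_nat_mul, ← Real.exp_nat_mul, ← Real.exp_add, ← Real.exp_add]
      congr 1
      push_cast
      ring
    simp only [hpt]
    rw [lintegral_const_mul _ (by
      exact (Real.continuous_exp.comp
        ((continuous_const.mul (continuous_const.inner continuous_id)))).measurable.ennreal_ofReal),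
      lintegral_exp_lin_mu (-2) h, ← ENNReal.ofReal_mul (exp_nonneg _), ← Real.exp_add]
    congr 2
    ring_nf
  have stepB : ∫⁻ z, B z ^ (2:ℝ) ∂(gaussMeasure n)
      ≤ ∫⁻ x, ENNReal.ofReal ((cosh (2 * ρ * f x) - 1)/2) ∂(gaussMeasure n) := by
    refine lintegral_mono fun z => ?_
    show ENNReal.ofReal (cosh (ρ * f z) - 1) ^ (2:ℝ) ≤ _
    rw [show ((2:ℝ)) = ((2:ℕ):ℝ) by norm_num, ENNReal.rpow_natCast,
      ← ENNReal.ofReal_pow (cosh_sub_one_nonneg _)]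
    refine ENNReal.ofReal_le_ofReal ?_
    have := cosh_sq_bound (ρ * f z)
    calc (cosh (ρ * f z) - 1)^2 ≤ (cosh (2*(ρ * f z)) - 1)/2 := this
      _ = (cosh (2 * ρ * f z) - 1)/2 := by rw [mul_assoc]
  calc ∫⁻ x, ENNReal.ofReal (cosh (ρ * f (x - h)) - 1) ∂(gaussMeasure n)
      = ∫⁻ z, (A * B) z ∂(gaussMeasure n) := step1
    _ ≤ (∫⁻ z, A z ^ (2:ℝ) ∂(gaussMeasure n)) ^ (1/2:ℝ) *
        (∫⁻ z, B z ^ (2:ℝ) ∂(gaussMeasure n)) ^ (1/2:ℝ) := holder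
    _ ≤ _ := by
        rw [stepA]
        exact mul_le_mul_right (ENNReal.rpow_le_rpow stepB (by norm_num)) _

lemma core_real (f : EuclideanSpace ℝ (Fin n) → ℝ) (hmeas : Measurable f)
    (ρ : ℝ) (h : EuclideanSpace ℝ (Fin n))
    (hint : Integrable (fun x => cosh (2 * ρ * f x) - 1) (gaussMeasure n)) :
    Integrable (fun x => cosh (ρ * f (x - h)) - 1) (gaussMeasure n) ∧
    ∫ x, (cosh (ρ * f (x - h)) - 1) ∂(gaussMeasure n) ≤
      (Real.sqrt 2)⁻¹ * exp (‖h‖^2/2) *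
        Real.sqrt (∫ x, (cosh (2 * ρ * f x) - 1) ∂(gaussMeasure n)) := by
  set μ := gaussMeasure n
  set I := ∫ x, (cosh (2 * ρ * f x) - 1) ∂μ with hI
  have hI0 : 0 ≤ I := integral_nonneg fun x => cosh_sub_one_nonneg _
  have hintd : Integrable (fun x => (cosh (2 * ρ * f x) - 1)/2) μ := hint.div_const 2
  have hlin : ∫⁻ x, ENNReal.ofReal ((cosh (2 * ρ * f x) - 1)/2) ∂μ
      = ENNReal.ofReal (I/2) := by
    rw [← ofReal_integral_eq_lintegral_ofReal hintd
      (Filter.Eventually.of_forall fun x => by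
        simp only [Pi.zero_apply]
        exact div_nonneg (cosh_sub_one_nonneg _) two_pos.le), integral_div]
  have hR0 : 0 ≤ (Real.sqrt 2)⁻¹ * exp (‖h‖^2/2) * Real.sqrt I := by positivity
  have hRHS : ENNReal.ofReal (exp (‖h‖^2)) ^ (1/2 : ℝ) *
      (∫⁻ x, ENNReal.ofReal ((cosh (2 * ρ * f x) - 1)/2) ∂μ) ^ (1/2 : ℝ)
      = ENNReal.ofReal ((Real.sqrt 2)⁻¹ * exp (‖h‖^2/2) * Real.sqrt I) := by
    rw [hlin, ENNReal.ofReal_rpow_of_pos (exp_pos _),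
      ENNReal.ofReal_rpow_of_nonneg (by positivity) (by norm_num),
      ← ENNReal.ofReal_mul (by positivity)]
    congr 1
    rw [← Real.sqrt_eq_rpow, ← Real.sqrt_eq_rpow, ← Real.exp_half,
      Real.sqrt_div hI0 2]
    rw [div_eq_mul_inv]
    ring
  have hcore := core_lintegral f hmeas ρ h
  rw [hRHS] at hcore
  have hmeasτ : Measurable fun x => cosh (ρ * f ((x : EuclideanSpace ℝ (Fin n)) - h)) - 1 :=
    (Real.continuous_cosh.measurable.comp
      ((hmeas.comp (measurable_sub_const h)).const_mul ρ)).sub measurable_const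
  have hfin : HasFiniteIntegral (fun x => cosh (ρ * f (x - h)) - 1) μ := by
    rw [hasFiniteIntegral_iff_ofReal
      (Filter.Eventually.of_forall fun x => cosh_sub_one_nonneg _)]
    exact lt_of_le_of_lt hcore ENNReal.ofReal_lt_top
  refine ⟨⟨hmeasτ.aestronglyMeasurable, hfin⟩, ?_⟩
  rw [integral_eq_lintegral_of_nonneg_ae
    (Filter.Eventually.of_forall fun x => cosh_sub_one_nonneg _)
    hmeasτ.aestronglyMeasurable]
  exact ENNReal.toReal_le_of_le_ofReal hR0 hcore

lemma mem_double (f : EuclideanSpace ℝ (Fin n) → ℝ) (hmeas : Measurable f)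
    (h : EuclideanSpace ℝ (Fin n)) (hh : ‖h‖ ≤ Real.sqrt (Real.log 2))
    {ρ : ℝ} (hρ : 0 < ρ)
    (h1 : ∫ x, (cosh (f x / ρ) - 1) ∂(gaussMeasure n) ≤ 1)
    (h2 : Integrable (fun x => cosh (f x / ρ) - 1) (gaussMeasure n)) :
    0 < 2*ρ ∧ (∫ x, (cosh (f (x - h) / (2*ρ)) - 1) ∂(gaussMeasure n) ≤ 1) ∧
      Integrable (fun x => cosh (f (x - h) / (2*ρ)) - 1) (gaussMeasure n) := by
  simp only [div_eq_inv_mul] at h1 h2 ⊢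
  have harg : ∀ x : EuclideanSpace ℝ (Fin n), 2 * (2*ρ)⁻¹ * f x = ρ⁻¹ * f x := fun x => by
    rw [mul_inv]; ring
  have hint : Integrable (fun x => cosh (2 * (2*ρ)⁻¹ * f x) - 1) (gaussMeasure n) := by
    simp only [harg]; exact h2
  obtain ⟨hint2, hle⟩ := core_real f hmeas ((2*ρ)⁻¹) h hint
  simp only [harg] at hle
  have hb : exp (‖h‖^2/2) ≤ Real.sqrt 2 := by
    have hlog : (0:ℝ) ≤ Real.log 2 := Real.log_nonneg one_le_two
    have hsq : Real.sqrt (Real.log 2) ^ 2 = Real.log 2 := Real.sq_sqrt hlog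
    have h2' : ‖h‖^2 ≤ Real.log 2 := by
      nlinarith [norm_nonneg h, Real.sqrt_nonneg (Real.log 2)]
    calc exp (‖h‖^2/2) ≤ exp (Real.log 2 / 2) := exp_le_exp.mpr (by linarith)
      _ = Real.sqrt 2 := by rw [Real.exp_half, Real.exp_log two_pos]
  have hs : Real.sqrt (∫ x, (cosh (ρ⁻¹ * f x) - 1) ∂(gaussMeasure n)) ≤ 1 := by
    rw [show (1:ℝ) = Real.sqrt 1 by simp]
    exact Real.sqrt_le_sqrt (by simpa using h1)
  refine ⟨by positivity, le_trans hle ?_, hint2⟩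
  have hfin : (Real.sqrt 2)⁻¹ * Real.sqrt 2 * 1 = 1 := by
    rw [inv_mul_cancel₀ (ne_of_gt (Real.sqrt_pos.mpr two_pos)), one_mul]
  calc (Real.sqrt 2)⁻¹ * exp (‖h‖^2/2) *
        Real.sqrt (∫ x, (cosh (ρ⁻¹ * f x) - 1) ∂(gaussMeasure n))
      ≤ (Real.sqrt 2)⁻¹ * Real.sqrt 2 * 1 := by
        have := Real.sqrt_nonneg (∫ x, (cosh (ρ⁻¹ * f x) - 1) ∂(gaussMeasure n))
        gcongr
    _ = 1 := hfin

/-- translation boundedness in the exponential space: the translate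
`τ_h f = f(·−h)` of `f ∈ L^{cosh−1}(M)` is in `L^{cosh−1}(M)`, with
`∫(cosh−1)(ρτ_h f)dM ≤ 2^{−1/2}e^{|h|²/2}(∫(cosh−1)(2ρf)dM)^{1/2}`, and
`|h| ≤ √(log 2)` implies `‖τ_h f‖ ≤ 2‖f‖` in the Luxemburg norm. -/
theorem translation_exponential_space {n : ℕ}
    (f : EuclideanSpace ℝ (Fin n) → ℝ) (hmeas : Measurable f)
    (h : EuclideanSpace ℝ (Fin n)) :
    ((∃ α : ℝ, 0 < α ∧
        Integrable (fun x => cosh (α * f x) - 1) (gaussMeasure n)) →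
      (∃ α : ℝ, 0 < α ∧
        Integrable (fun x => cosh (α * f (x - h)) - 1) (gaussMeasure n))) ∧
    (∀ ρ : ℝ, 0 < ρ →
      Integrable (fun x => cosh (2 * ρ * f x) - 1) (gaussMeasure n) →
      ∫ x, (cosh (ρ * f (x - h)) - 1) ∂(gaussMeasure n) ≤
        (Real.sqrt 2)⁻¹ * exp (‖h‖ ^ 2 / 2) *
          Real.sqrt (∫ x, (cosh (2 * ρ * f x) - 1) ∂(gaussMeasure n))) ∧
    (‖h‖ ≤ Real.sqrt (log 2) →
      luxNorm (fun u => cosh u - 1) (gaussMeasure n) (fun x => f (x - h)) ≤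
        2 * luxNorm (fun u => cosh u - 1) (gaussMeasure n) f) := by
  refine ⟨?_, ?_, ?_⟩
  · rintro ⟨α, hα, hint⟩
    refine ⟨α/2, by positivity, ?_⟩
    have harg : (fun x => cosh (2 * (α/2) * f x) - 1)
        = fun x => cosh (α * f x) - 1 := by
      funext x; ring_nf
    exact (core_real f hmeas (α/2) h (by rw [harg]; exact hint)).1
  · intro ρ hρ hint
    exact (core_real f hmeas ρ h hint).2
  · intro hh
    have hτ : Measurable fun x : EuclideanSpace ℝ (Fin n) => f (x - h) :=
      hmeas.comp (measurable_sub_const h)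
    set T := {ρ : ℝ | 0 < ρ ∧ (∫ x, (cosh (f (x - h) / ρ) - 1) ∂(gaussMeasure n)) ≤ 1 ∧
      Integrable (fun x => cosh (f (x - h) / ρ) - 1) (gaussMeasure n)} with hT
    set S := {ρ : ℝ | 0 < ρ ∧ (∫ x, (cosh (f x / ρ) - 1) ∂(gaussMeasure n)) ≤ 1 ∧
      Integrable (fun x => cosh (f x / ρ) - 1) (gaussMeasure n)} with hS
    have hluxT : luxNorm (fun u => cosh u - 1) (gaussMeasure n) (fun x => f (x - h))
        = sInf T := rfl
    have hluxS : luxNorm (fun u => cosh u - 1) (gaussMeasure n) f = sInf S := rfl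
    have forward : ∀ ρ ∈ S, 2*ρ ∈ T := by
      intro ρ hρ
      exact mem_double f hmeas h hh hρ.1 hρ.2.1 hρ.2.2
    have backward : ∀ ρ ∈ T, 2*ρ ∈ S := by
      intro ρ hρ
      have hmem := mem_double (fun x => f (x - h)) hτ (-h) (by rwa [norm_neg])
        hρ.1 hρ.2.1 hρ.2.2
      simp only [sub_neg_eq_add, add_sub_cancel_right] at hmem
      exact ⟨hmem.1, hmem.2.1, hmem.2.2⟩
    by_cases hSempty : S = ∅
    · have hTempty : T = ∅ := by
        rw [Set.eq_empty_iff_forall_notMem]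
        intro ρ hρ
        have := backward ρ hρ
        rw [hSempty] at this
        exact this
      rw [hluxT, hluxS, hTempty, hSempty, Real.sInf_empty]
      norm_num
    · obtain ⟨ρ₀, hρ₀⟩ := Set.nonempty_iff_ne_empty.mpr hSempty
      have hbddT : BddBelow T := ⟨0, fun ρ hρ => (hρ.1).le⟩
      have hup : ∀ ρ ∈ S, sInf T ≤ 2*ρ := fun ρ hρ => csInf_le hbddT (forward ρ hρ)
      have hmid : sInf T / 2 ≤ sInf S :=
        le_csInf ⟨ρ₀, hρ₀⟩ fun ρ hρ => by linarith [hup ρ hρ]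
      rw [hluxT, hluxS]; linarith
end
end
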